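/- Let H be a complex Hilbert space and let a, b, x be bounded operators on H with a unitary. Let ξ ∈ H be a unit vector with aξ = λξ for some λ ∈ ℂ. Suppose that for every unit vector ζ ∈ H the matrix Q_{p_ζ} is positive semidefinite, where p_ζ is the vector state p_ζ(T) = ⟪Tζ, ζ⟫. Then for every vector η ∈ H: |⟪(x − ab)η, ξ⟫| + |⟪(x − ba)ξ, η⟫| ≤ √(1 − |⟪bξ, ξ⟫|²) · ‖(λ·I − a)η‖. -/

import Mathlib

open scoped ComplexOrder ComplexInnerProductSpace
open Complex ComplexConjugate


private lemma quad_aux {A B d : ℝ} (hA : 0 ≤ A) (hd : 0 ≤ d)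
    (h : ∀ ρ : ℝ, 0 ≤ A * ρ^2 - 2*d*ρ + B) :
    d ≤ Real.sqrt A * Real.sqrt B := by
  have hB : 0 ≤ B := by simpa using h 0
  have hdisc : discrim A (-(2*d)) B ≤ 0 := by
    apply discrim_le_zero
    intro x
    nlinarith [h x]
  rw [discrim] at hdisc
  have hd2 : d^2 ≤ A * B := by nlinarith
  calc d = Real.sqrt (d^2) := by rw [Real.sqrt_sq hd]
    _ ≤ Real.sqrt (A*B) := Real.sqrt_le_sqrt hd2
    _ = Real.sqrt A * Real.sqrt B := Real.sqrt_mul hA B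

private lemma psd_scalar {α β γ : ℂ}
    (hQ : (!![1, α, γ; conj α, 1, β; conj γ, conj β, 1] : Matrix (Fin 3) (Fin 3) ℂ).PosSemidef) :
    ‖γ - α*β‖ ≤ Real.sqrt (1 - ‖α‖^2) * Real.sqrt (1 - ‖β‖^2) := by
  have hform : ∀ r t : ℂ,
      0 ≤ (1 - α * conj α) * (conj r * r) + (1 - β * conj β) * (conj t * t)
        + conj r * (γ - α*β) * t + r * conj (γ - α*β) * conj t := by
    intro r t
    have h := hQ.dotProduct_mulVec_nonneg ![r, -(conj α * r + β * t), t]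
    simp [dotProduct, Matrix.mulVec, Fin.sum_univ_three, Matrix.cons_val_zero,
      Matrix.cons_val_one, Matrix.head_cons, map_add, map_mul, map_neg] at h
    convert h using 1
    ring_nf
    simp [Complex.star_def]
    ring_nf
  have hαn : α * conj α = ((‖α‖ ^2 : ℝ) : ℂ) := by
    rw [Complex.mul_conj, ← Complex.sq_norm]
  have hβn : β * conj β = ((‖β‖ ^2 : ℝ) : ℂ) := by
    rw [Complex.mul_conj, ← Complex.sq_norm]
  have hA : 0 ≤ 1 - ‖α‖^2 := by
    have h := hform 1 0
    simp only [map_one, mul_one, one_mul, mul_zero, zero_mul, map_zero, add_zero] at h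
    rw [hαn, show (1:ℂ) - ((‖α‖ ^2 : ℝ) : ℂ) = ((1 - ‖α‖^2 : ℝ) : ℂ) by
      push_cast; ring] at h
    exact_mod_cast h
  apply quad_aux hA (norm_nonneg _)
  intro ρ
  by_cases h0 : γ - α*β = 0
  · have h := hform 0 1
    simp only [map_zero, zero_mul, mul_zero, add_zero, map_one, mul_one, zero_add] at h
    rw [hβn, show (1:ℂ) - ((‖β‖ ^2 : ℝ) : ℂ) = ((1 - ‖β‖^2 : ℝ) : ℂ) by
      push_cast; ring] at h
    have hB : (0:ℝ) ≤ 1 - ‖β‖^2 := by exact_mod_cast h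
    simp only [h0, map_zero, norm_zero]
    nlinarith [sq_nonneg ρ, hA]
  · set δ := γ - α*β with hδ
    have habsδ : (‖δ‖ : ℂ) ≠ 0 := by
      simpa using h0
    obtain ⟨v, hcuu, hcu, hcu2⟩ : ∃ v : ℂ, conj v * v = 1 ∧ conj v * δ = (‖δ‖ : ℂ)
        ∧ v * conj δ = (‖δ‖ : ℂ) := by
      refine ⟨δ / ‖δ‖, ?_, ?_, ?_⟩
      · rw [map_div₀, Complex.conj_ofReal]
        field_simp
        rw [mul_comm, Complex.mul_conj, Complex.normSq_eq_norm_sq]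
        push_cast; ring
      · rw [map_div₀, Complex.conj_ofReal]
        field_simp
        rw [mul_comm, Complex.mul_conj, Complex.normSq_eq_norm_sq]
        push_cast; ring
      · rw [div_mul_eq_mul_div, Complex.mul_conj, Complex.normSq_eq_norm_sq]
        field_simp
        push_cast; ring
    have hkey := hform (-(ρ:ℂ) * v) 1
    have hexp : (1 - α * conj α) * (conj (-(ρ:ℂ) * v) * (-(ρ:ℂ) * v)) + (1 - β * conj β) * (conj (1:ℂ) * 1)
        + conj (-(ρ:ℂ) * v) * δ * 1 + (-(ρ:ℂ) * v) * conj δ * conj (1:ℂ)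
        = (((1 - ‖α‖^2) * ρ^2 - 2 * ‖δ‖ * ρ + (1 - ‖β‖^2) : ℝ) : ℂ) := by
      simp only [map_mul, map_neg, map_one, Complex.conj_ofReal]
      push_cast
      push_cast at hαn hβn
      linear_combination ((ρ:ℂ)^2*(1 - α*conj α)) * hcuu - (ρ:ℂ)*hcu - (ρ:ℂ)*hcu2
        - (ρ:ℂ)^2*hαn - hβn
    rw [hexp] at hkey
    exact_mod_cast hkey

section Core
variable {H : Type*} [NormedAddCommGroup H] [InnerProductSpace ℂ H] [CompleteSpace H]

private lemma psd_unnormalized (a b x : H →L[ℂ] H)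
    (hQ : ∀ ζ : H, ‖ζ‖ = 1 →
      ‖⟪ζ, x ζ⟫ - ⟪ζ, a ζ⟫ * ⟪ζ, b ζ⟫‖ ≤
        Real.sqrt (1 - ‖⟪ζ, a ζ⟫‖^2) * Real.sqrt (1 - ‖⟪ζ, b ζ⟫‖^2)) :
    ∀ u : H, u ≠ 0 →
    ‖⟪u, x u⟫ * ⟪u, u⟫ - ⟪u, a u⟫ * ⟪u, b u⟫‖ ≤
      Real.sqrt ((‖u‖^2)^2 - ‖⟪u, a u⟫‖^2) *
      Real.sqrt ((‖u‖^2)^2 - ‖⟪u, b u⟫‖^2) := by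
  intro u hu
  have hn : (0:ℝ) < ‖u‖ := norm_pos_iff.mpr hu
  set r : ℝ := ‖u‖ with hr
  set ζ : H := ((r⁻¹ : ℝ) : ℂ) • u with hζ
  have hζ1 : ‖ζ‖ = 1 := by
    rw [hζ, norm_smul]
    simp [Complex.norm_real, abs_of_pos (inv_pos.mpr hn), hr]
    field_simp
  have hip : ∀ T : H →L[ℂ] H, ⟪ζ, T ζ⟫ = ((r⁻¹:ℝ):ℂ)^2 * ⟪u, T u⟫ := by
    intro T
    rw [hζ, map_smul, inner_smul_left, inner_smul_right, Complex.conj_ofReal]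
    ring
  have key := hQ ζ hζ1
  rw [hip a, hip b, hip x] at key
  have hiuu : (⟪u, u⟫ : ℂ) = ((r^2 : ℝ) : ℂ) := by
    rw [inner_self_eq_norm_sq_to_K, ← hr]; norm_cast
  -- rewrite the abs values
  have hr2 : (0:ℝ) < r^2 := by positivity
  have habs : ∀ z : ℂ, ‖((r⁻¹:ℝ):ℂ)^2 * z‖ = (r^2)⁻¹ * ‖z‖ := by
    intro z
    rw [norm_mul, norm_pow]
    simp [Complex.norm_real, abs_of_pos (inv_pos.mpr hn)]
  rw [habs, habs] at key
  have hL : ‖⟪u, x u⟫ * ⟪u, u⟫ - ⟪u, a u⟫ * ⟪u, b u⟫‖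
      = (r^2)^2 * ‖((r⁻¹:ℝ):ℂ)^2 * ⟪u, x u⟫ - ((r⁻¹:ℝ):ℂ)^2 * ⟪u, a u⟫ * (((r⁻¹:ℝ):ℂ)^2 * ⟪u, b u⟫)‖ := by
    rw [show ((r⁻¹:ℝ):ℂ)^2 * ⟪u, x u⟫ - ((r⁻¹:ℝ):ℂ)^2 * ⟪u, a u⟫ * (((r⁻¹:ℝ):ℂ)^2 * ⟪u, b u⟫)
        = ((((r^2)^2)⁻¹ : ℝ):ℂ) * (⟪u, x u⟫ * ⟪u, u⟫ - ⟪u, a u⟫ * ⟪u, b u⟫) by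
      rw [hiuu]; push_cast; field_simp]
    rw [norm_mul]
    simp [Complex.norm_real, abs_of_pos (inv_pos.mpr hr2)]
    field_simp
  have hsq : ∀ z : ℂ, 1 - ((r^2)⁻¹ * ‖z‖)^2 = ((r^2)^2)⁻¹ * ((r^2)^2 - ‖z‖^2) := by
    intro z; field_simp
  rw [hL]
  calc (r^2)^2 * ‖((r⁻¹:ℝ):ℂ)^2 * ⟪u, x u⟫ - ((r⁻¹:ℝ):ℂ)^2 * ⟪u, a u⟫ * (((r⁻¹:ℝ):ℂ)^2 * ⟪u, b u⟫)‖
      ≤ (r^2)^2 * (Real.sqrt (1 - ((r^2)⁻¹ * ‖⟪u, a u⟫‖)^2) *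
          Real.sqrt (1 - ((r^2)⁻¹ * ‖⟪u, b u⟫‖)^2)) := by
        apply mul_le_mul_of_nonneg_left key (by positivity)
    _ = Real.sqrt ((r^2)^2 - ‖⟪u, a u⟫‖^2) * Real.sqrt ((r^2)^2 - ‖⟪u, b u⟫‖^2) := by
        rw [hsq, hsq, Real.sqrt_mul (by positivity), Real.sqrt_mul (by positivity),
          Real.sqrt_inv, Real.sqrt_sq (by positivity)]
        field_simp

private lemma core (a b x : H →L[ℂ] H)
    (ha : star a * a = 1 ∧ a * star a = 1)
    (ξ : H) (hξ : ‖ξ‖ = 1) (l : ℂ) (haξ : a ξ = l • ξ)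
    (hL2 : ∀ u : H, u ≠ 0 →
      ‖⟪u, x u⟫ * ⟪u, u⟫ - ⟪u, a u⟫ * ⟪u, b u⟫‖ ≤
        Real.sqrt ((‖u‖^2)^2 - ‖⟪u, a u⟫‖^2) *
        Real.sqrt ((‖u‖^2)^2 - ‖⟪u, b u⟫‖^2))
    (v : H) :
    ‖⟪ξ, (x - a * b) v⟫ + ⟪v, (x - b * a) ξ⟫‖ ≤
      Real.sqrt (1 - ‖⟪ξ, b ξ⟫‖^2) * ‖(l • (1 : H →L[ℂ] H) - a) v‖ := by
  -- basic facts about a and l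
  have hξξ : (⟪ξ, ξ⟫ : ℂ) = 1 := by
    rw [inner_self_eq_norm_sq_to_K, hξ]; norm_num
  have hsa : ∀ w : H, (star a) (a w) = w := by
    intro w
    have : (star a * a) w = (1 : H →L[ℂ] H) w := by rw [ha.1]
    simpa [ContinuousLinearMap.mul_apply] using this
  have hinner_a : ∀ w w' : H, (⟪a w, a w'⟫ : ℂ) = ⟪w, w'⟫ := by
    intro w w'
    rw [show (⟪a w, a w'⟫:ℂ) = ⟪w, (star a) (a w')⟫ by
      rw [ContinuousLinearMap.star_eq_adjoint, ContinuousLinearMap.adjoint_inner_right], hsa]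
  have hll : conj l * l = 1 := by
    have h := hinner_a ξ ξ
    rw [haξ, inner_smul_left, inner_smul_right, hξξ] at h
    simpa using h
  have hl0 : l ≠ 0 := by
    intro h; rw [h] at hll; simp at hll
  have habsl : ‖l‖ = 1 := by
    have : Complex.normSq l = 1 := by
      have := hll
      rw [mul_comm, Complex.mul_conj] at this
      exact_mod_cast this
    rw [Complex.norm_def, this, Real.sqrt_one]
  have hsaξ : (star a) ξ = conj l • ξ := by
    have h1 : (star a) (a ξ) = ξ := hsa ξ
    rw [haξ, map_smul] at h1
    calc (star a) ξ = (conj l * l) • (star a) ξ := by rw [hll, one_smul]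
      _ = conj l • (l • (star a) ξ) := by rw [mul_smul]
      _ = conj l • ξ := by rw [h1]
  have hXa : ∀ w : H, (⟪ξ, a w⟫ : ℂ) = l * ⟪ξ, w⟫ := by
    intro w
    rw [show (⟪ξ, a w⟫:ℂ) = ⟪(star a) ξ, w⟫ by
      rw [ContinuousLinearMap.star_eq_adjoint, ContinuousLinearMap.adjoint_inner_left],
      hsaξ, inner_smul_left]
    simp
  -- ⟪ξ, x ξ⟫ = l * ⟪ξ, b ξ⟫
  have hξ0 : ξ ≠ 0 := by
    intro h; rw [h] at hξ; simp at hξ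
  have haξξ : (⟪ξ, a ξ⟫ : ℂ) = l := by rw [hXa, hξξ, mul_one]
  have hB0X : (⟪ξ, x ξ⟫ : ℂ) = l * ⟪ξ, b ξ⟫ := by
    have h := hL2 ξ hξ0
    rw [hξξ, haξξ, hξ, habsl] at h
    norm_num at h
    have h0 : ‖⟪ξ, x ξ⟫ - l * ⟪ξ, b ξ⟫‖ ≤ 0 := by
      simpa using h
    have := norm_nonneg (⟪ξ, x ξ⟫ - l * ⟪ξ, b ξ⟫)
    have : ‖⟪ξ, x ξ⟫ - l * ⟪ξ, b ξ⟫‖ = 0 := le_antisymm h0 this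
    rw [norm_eq_zero, sub_eq_zero] at this
    exact this
  -- atoms
  obtain ⟨c, hcdef⟩ : ∃ z : ℂ, z = ⟪ξ, v⟫ + ⟪v, ξ⟫ := ⟨_, rfl⟩
  obtain ⟨s, hsdef⟩ : ∃ z : ℂ, z = ⟪v, v⟫ := ⟨_, rfl⟩
  obtain ⟨A2, hA2def⟩ : ∃ z : ℂ, z = ⟪v, a v⟫ := ⟨_, rfl⟩
  obtain ⟨B0, hB0def⟩ : ∃ z : ℂ, z = ⟪ξ, b ξ⟫ := ⟨_, rfl⟩
  obtain ⟨B1, hB1def⟩ : ∃ z : ℂ, z = ⟪ξ, b v⟫ + ⟪v, b ξ⟫ := ⟨_, rfl⟩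
  obtain ⟨B2, hB2def⟩ : ∃ z : ℂ, z = ⟪v, b v⟫ := ⟨_, rfl⟩
  obtain ⟨X1, hX1def⟩ : ∃ z : ℂ, z = ⟪ξ, x v⟫ + ⟪v, x ξ⟫ := ⟨_, rfl⟩
  obtain ⟨X2, hX2def⟩ : ∃ z : ℂ, z = ⟪v, x v⟫ := ⟨_, rfl⟩
  have hc : conj c = c := by rw [hcdef]; simp [inner_conj_symm]; ring
  have hs : conj s = s := by rw [hsdef]; simp [inner_conj_symm]
  -- the curve u t
  obtain ⟨u, hudef⟩ : ∃ u : ℝ → H, u = fun t : ℝ => ξ + (t:ℂ) • v := ⟨_, rfl⟩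
  have hexpand : ∀ (T : H →L[ℂ] H) (t : ℝ), (⟪u t, T (u t)⟫ : ℂ)
      = ⟪ξ, T ξ⟫ + (t:ℂ) * (⟪ξ, T v⟫ + ⟪v, T ξ⟫) + (t:ℂ)^2 * ⟪v, T v⟫ := by
    intro T t
    rw [hudef]
    simp only [map_add, map_smul, inner_add_left, inner_add_right, inner_smul_left,
      inner_smul_right, Complex.conj_ofReal]
    ring
  have hν : ∀ t : ℝ, (⟪u t, u t⟫ : ℂ) = 1 + (t:ℂ) * c + (t:ℂ)^2 * s := by
    intro t
    rw [hudef]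
    simp only [inner_add_left, inner_add_right, inner_smul_left, inner_smul_right,
      Complex.conj_ofReal]
    rw [hξξ, hcdef, hsdef]
    ring
  have hA : ∀ t : ℝ, (⟪u t, a (u t)⟫ : ℂ) = l + (t:ℂ) * (l * c) + (t:ℂ)^2 * A2 := by
    intro t
    rw [hexpand a t, haξξ, hXa v, show (⟪v, a ξ⟫:ℂ) = l * ⟪v, ξ⟫ by
      rw [haξ, inner_smul_right], hcdef, hA2def]
    ring
  have hB : ∀ t : ℝ, (⟪u t, b (u t)⟫ : ℂ) = B0 + (t:ℂ) * B1 + (t:ℂ)^2 * B2 := by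
    intro t
    rw [hexpand b t, hB0def, hB1def, hB2def]
  have hX : ∀ t : ℝ, (⟪u t, x (u t)⟫ : ℂ) = l * B0 + (t:ℂ) * X1 + (t:ℂ)^2 * X2 := by
    intro t
    rw [hexpand x t, hB0X, hB0def, hX1def, hX2def]
  -- polynomials M, G, and the real functions
  obtain ⟨S, hSdef⟩ : ∃ z : ℂ, z = X1 - l * B1 := ⟨_, rfl⟩
  obtain ⟨M, hMdef⟩ : ∃ M : ℝ → ℂ, M = fun t : ℝ => S
      + (t:ℂ) * (l*B0*s + X1*c + X2 - l*B2 - l*c*B1 - A2*B0)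
      + (t:ℂ)^2 * (X1*s + X2*c - l*c*B2 - A2*B1)
      + (t:ℂ)^3 * (X2*s - A2*B2) := ⟨_, rfl⟩
  obtain ⟨G, hGdef⟩ : ∃ G : ℝ → ℂ, G = fun t : ℝ =>
      (2*s - conj l * A2 - l * conj A2) * (1 + (t:ℂ)*c)
      + (t:ℂ)^2 * (s^2 - A2 * conj A2) := ⟨_, rfl⟩
  have identity1 : ∀ t : ℝ, (⟪u t, x (u t)⟫ : ℂ) * ⟪u t, u t⟫
      - ⟪u t, a (u t)⟫ * ⟪u t, b (u t)⟫ = (t:ℂ) * M t := by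
    intro t
    rw [hν, hA, hB, hX, hMdef, hSdef]
    ring
  have hconjA : ∀ t : ℝ, conj (⟪u t, a (u t)⟫ : ℂ)
      = conj l + (t:ℂ) * (conj l * c) + (t:ℂ)^2 * conj A2 := by
    intro t
    rw [hA]
    simp only [map_add, map_mul, map_pow, Complex.conj_ofReal, hc]
  have identity2 : ∀ t : ℝ, ((⟪u t, u t⟫ : ℂ))^2
      - ⟪u t, a (u t)⟫ * conj (⟪u t, a (u t)⟫ : ℂ) = (t:ℂ)^2 * G t := by
    intro t
    rw [hν, hconjA, hA, hGdef]
    simp only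
    linear_combination (-(1+(t:ℂ)*c)^2) * hll
  -- the vector w = (l•1 - a) v and G 0
  obtain ⟨w, hwdef⟩ : ∃ w : H, w = (l • (1 : H →L[ℂ] H) - a) v := ⟨_, rfl⟩
  have hw0 : (⟪w, w⟫ : ℂ) = G 0 := by
    rw [hwdef]
    simp only [ContinuousLinearMap.sub_apply, ContinuousLinearMap.smul_apply,
      ContinuousLinearMap.one_apply]
    rw [inner_sub_left, inner_sub_right, inner_sub_right, inner_smul_left, inner_smul_right,
      inner_smul_left, inner_smul_right]
    rw [hinner_a v v, show (⟪a v, v⟫:ℂ) = conj ⟪v, a v⟫ from (inner_conj_symm _ _).symm]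
    rw [← hsdef, ← hA2def, hGdef]
    simp only [Complex.ofReal_zero, zero_mul, mul_zero, add_zero, zero_pow, mul_one,
      ne_eq, OfNat.ofNat_ne_zero, not_false_eq_true, zero_add]
    linear_combination s * hll
  have hGw : (G 0).re = ‖w‖^2 := by
    have h2 : ((‖w‖^2 : ℝ) : ℂ) = G 0 := by
      rw [← hw0]
      rw [inner_self_eq_norm_sq_to_K]
      norm_cast
    rw [← h2, Complex.ofReal_re]
  -- real norm/abs functions of t
  obtain ⟨nre, hnredef⟩ : ∃ f : ℝ → ℝ, f = fun t : ℝ => (1 + (t:ℂ) * c + (t:ℂ)^2 * s).re :=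
    ⟨_, rfl⟩
  obtain ⟨Bf, hBfdef⟩ : ∃ f : ℝ → ℂ, f = fun t : ℝ => B0 + (t:ℂ) * B1 + (t:ℂ)^2 * B2 :=
    ⟨_, rfl⟩
  obtain ⟨Hb, hHbdef⟩ : ∃ f : ℝ → ℝ,
      f = fun t : ℝ => (nre t)^2 - (‖Bf t‖)^2 := ⟨_, rfl⟩
  have hns : ∀ z : H, ((‖z‖^2 : ℝ) : ℂ) = ⟪z, z⟫ := by
    intro z
    rw [inner_self_eq_norm_sq_to_K]
    norm_cast
  have hnre : ∀ t : ℝ, ‖u t‖^2 = nre t := by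
    intro t
    have h := congrArg Complex.re ((hns (u t)).trans (hν t))
    simp only [Complex.ofReal_re] at h
    rw [hnredef]
    exact h
  have habsA : ∀ t : ℝ, (‖u t‖^2)^2 - ‖(⟪u t, a (u t)⟫:ℂ)‖^2 = t^2 * (G t).re := by
    intro t
    have h := identity2 t
    rw [← hns (u t),
      show (⟪u t, a (u t)⟫:ℂ) * conj (⟪u t, a (u t)⟫:ℂ)
          = ((‖(⟪u t, a (u t)⟫:ℂ)‖^2 : ℝ) : ℂ) by
        rw [Complex.mul_conj, Complex.normSq_eq_norm_sq]] at h
    have h2 := congrArg Complex.re h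
    simpa [← Complex.ofReal_pow, Complex.sub_re, Complex.ofReal_re,
      Complex.re_ofReal_mul] using h2
  have habsB : ∀ t : ℝ, (‖u t‖^2)^2 - ‖(⟪u t, b (u t)⟫:ℂ)‖^2 = Hb t := by
    intro t
    rw [hB t]
    simp only [hHbdef, hBfdef]
    rw [hnre t]
  -- the per-t inequality
  obtain ⟨δ, hδdef⟩ : ∃ δ : ℝ, δ = (1 + ‖v‖)⁻¹ := ⟨_, rfl⟩
  have hδpos : 0 < δ := by
    rw [hδdef]; positivity
  have hne : ∀ t ∈ Set.Ioo (0:ℝ) δ, u t ≠ 0 := by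
    intro t ht
    have h1 : ‖ξ‖ ≤ ‖ξ + (t:ℂ) • v‖ + ‖(t:ℂ) • v‖ := by
      have h0 := norm_sub_le (ξ + (t:ℂ) • v) ((t:ℂ) • v)
      simpa using h0
    have h2 : ‖(t:ℂ) • v‖ = t * ‖v‖ := by
      rw [norm_smul, Complex.norm_real, Real.norm_eq_abs, abs_of_pos ht.1]
    have h3 : t * ‖v‖ < 1 := by
      have ht2 : t < (1 + ‖v‖)⁻¹ := hδdef ▸ ht.2
      have hv1 : (0:ℝ) < 1 + ‖v‖ := by positivity
      have h5 : t * (1 + ‖v‖) < 1 := by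
        have h6 := mul_lt_mul_of_pos_right ht2 hv1
        rwa [inv_mul_cancel₀ (ne_of_gt hv1)] at h6
      nlinarith [ht.1, norm_nonneg v]
    have h4 : 0 < ‖ξ + (t:ℂ) • v‖ := by
      rw [hξ] at h1; rw [h2] at h1; linarith
    rw [hudef]
    simp only [ne_eq]
    intro hcon
    rw [hcon] at h4
    simp at h4
  have hper : ∀ t ∈ Set.Ioo (0:ℝ) δ,
      ‖M t‖ ≤ Real.sqrt ((G t).re) * Real.sqrt (Hb t) := by
    intro t ht
    have h := hL2 (u t) (hne t ht)
    rw [identity1 t, habsA t, habsB t] at h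
    rw [norm_mul, Complex.norm_real, Real.norm_eq_abs, abs_of_pos ht.1] at h
    rw [show t^2 * (G t).re = t^2 * (G t).re from rfl, Real.sqrt_mul (sq_nonneg t),
      Real.sqrt_sq ht.1.le] at h
    have h2 : t * ‖M t‖ ≤ t * (Real.sqrt ((G t).re) * Real.sqrt (Hb t)) := by
      linarith [h]
    exact le_of_mul_le_mul_left h2 ht.1
  -- limits
  have hMc' : Continuous M := by rw [hMdef]; fun_prop
  have hMc : Continuous fun t : ℝ => ‖M t‖ := continuous_norm.comp hMc'
  have hGc' : Continuous G := by rw [hGdef]; fun_prop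
  have hnrec : Continuous nre := by rw [hnredef]; fun_prop
  have hBfc : Continuous Bf := by rw [hBfdef]; fun_prop
  have hHbc : Continuous Hb := by
    rw [hHbdef]
    exact (hnrec.pow 2).sub ((continuous_norm.comp hBfc).pow 2)
  have hGc : Continuous fun t : ℝ => Real.sqrt ((G t).re) * Real.sqrt (Hb t) :=
    (Real.continuous_sqrt.comp (Complex.continuous_re.comp hGc')).mul
      (Real.continuous_sqrt.comp hHbc)
  have hlim1 : Filter.Tendsto (fun t : ℝ => ‖M t‖) (nhdsWithin 0 (Set.Ioi 0))
      (nhds (‖M 0‖)) :=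
    (hMc.tendsto 0).mono_left nhdsWithin_le_nhds
  have hlim2 : Filter.Tendsto (fun t : ℝ => Real.sqrt ((G t).re) * Real.sqrt (Hb t))
      (nhdsWithin 0 (Set.Ioi 0)) (nhds (Real.sqrt ((G 0).re) * Real.sqrt (Hb 0))) :=
    (hGc.tendsto 0).mono_left nhdsWithin_le_nhds
  have hfinal : ‖M 0‖ ≤ Real.sqrt ((G 0).re) * Real.sqrt (Hb 0) := by
    refine le_of_tendsto_of_tendsto hlim1 hlim2 ?_
    filter_upwards [Ioo_mem_nhdsGT hδpos] with t ht
    exact hper t ht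
  -- finish
  have hM0 : M 0 = S := by
    rw [hMdef]; simp
  have hHb0 : Hb 0 = 1 - ‖B0‖^2 := by
    rw [hHbdef, hnredef, hBfdef]; simp
  have hG0 : Real.sqrt ((G 0).re) = ‖w‖ := by
    rw [hGw, Real.sqrt_sq (norm_nonneg w)]
  rw [hM0, hG0, hHb0] at hfinal
  have harg : (⟪ξ, (x - a * b) v⟫ : ℂ) + ⟪v, (x - b * a) ξ⟫ = S := by
    simp only [ContinuousLinearMap.sub_apply, ContinuousLinearMap.mul_apply,
      inner_sub_right, inner_sub_left]
    rw [hXa (b v), haξ, map_smul, inner_smul_right, hSdef, hX1def, hB1def]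
    ring
  rw [harg, ← hB0def, ← hwdef]
  rw [mul_comm] at hfinal
  exact hfinal


end Core

/-- The 3×3 matrix `Q_p` associated with operators `a, b, x` and a functional
`p`; its rows are `(1, p a, p x)`, `(conj (p a), 1, p b)`,
`(conj (p x), conj (p b), 1)`. -/
def QmatOp {B : Type*} (p : B → ℂ) (a b x : B) : Matrix (Fin 3) (Fin 3) ℂ :=
  !![1, p a, p x;
     (starRingEnd ℂ) (p a), 1, p b;
     (starRingEnd ℂ) (p x), (starRingEnd ℂ) (p b), 1]

/- Note: `⟪ζ, T ζ⟫` (Mathlib's inner product, conjugate-linear in the first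
slot) equals the vector state `⟪Tζ, ζ⟫` written in the convention of the
paper, where the inner product is linear in its first slot. -/
theorem stmt_11 {H : Type*} [NormedAddCommGroup H] [InnerProductSpace ℂ H]
    [CompleteSpace H] (a b x : H →L[ℂ] H)
    (ha : star a * a = 1 ∧ a * star a = 1)
    (ξ : H) (hξ : ‖ξ‖ = 1) (l : ℂ) (haξ : a ξ = l • ξ)
    (hQ : ∀ ζ : H, ‖ζ‖ = 1 → (QmatOp (fun T : H →L[ℂ] H => ⟪ζ, T ζ⟫) a b x).PosSemidef) :
    ∀ η : H,
      ‖⟪ξ, (x - a * b) η⟫‖ + ‖⟪η, (x - b * a) ξ⟫‖ ≤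
        Real.sqrt (1 - ‖⟪ξ, b ξ⟫‖ ^ 2) * ‖(l • (1 : H →L[ℂ] H) - a) η‖ := by
  -- scalar form of the PSD hypothesis
  have hscalar : ∀ ζ : H, ‖ζ‖ = 1 →
      ‖⟪ζ, x ζ⟫ - ⟪ζ, a ζ⟫ * ⟪ζ, b ζ⟫‖ ≤
        Real.sqrt (1 - ‖⟪ζ, a ζ⟫‖^2) * Real.sqrt (1 - ‖⟪ζ, b ζ⟫‖^2) := by
    intro ζ hζ
    have h := hQ ζ hζ
    simp only [QmatOp] at h
    exact psd_scalar h
  -- unnormalized form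
  have hL2 : ∀ u : H, u ≠ 0 →
      ‖⟪u, x u⟫ * ⟪u, u⟫ - ⟪u, a u⟫ * ⟪u, b u⟫‖ ≤
        Real.sqrt ((‖u‖^2)^2 - ‖⟪u, a u⟫‖^2) *
        Real.sqrt ((‖u‖^2)^2 - ‖⟪u, b u⟫‖^2) :=
    psd_unnormalized a b x hscalar
  intro η
  -- choose the phase θ
  obtain ⟨u1, hu1⟩ : ∃ z : ℂ, z = ⟪ξ, (x - a * b) η⟫ := ⟨_, rfl⟩
  obtain ⟨u2, hu2⟩ : ∃ z : ℂ, z = ⟪η, (x - b * a) ξ⟫ := ⟨_, rfl⟩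
  obtain ⟨θ, hθ⟩ : ∃ z : ℂ,
      z = Complex.exp ((((u2.arg - u1.arg)/2 : ℝ) : ℂ) * Complex.I) := ⟨_, rfl⟩
  have hθabs : ‖θ‖ = 1 := by
    rw [hθ]; exact Complex.norm_exp_ofReal_mul_I _
  have hconjθ : (starRingEnd ℂ) θ
      = Complex.exp ((((u1.arg - u2.arg)/2 : ℝ) : ℂ) * Complex.I) := by
    rw [hθ, ← Complex.exp_conj]
    congr 1
    rw [map_mul, Complex.conj_ofReal, Complex.conj_I]
    push_cast
    ring
  have h1 : θ * u1 = ((‖u1‖ : ℝ) : ℂ)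
      * Complex.exp ((((u1.arg + u2.arg)/2 : ℝ) : ℂ) * Complex.I) := by
    conv_lhs => rw [← Complex.norm_mul_exp_arg_mul_I u1]
    rw [hθ, mul_comm, mul_assoc, ← Complex.exp_add]
    congr 2
    push_cast
    ring
  have h2 : (starRingEnd ℂ) θ * u2 = ((‖u2‖ : ℝ) : ℂ)
      * Complex.exp ((((u1.arg + u2.arg)/2 : ℝ) : ℂ) * Complex.I) := by
    conv_lhs => rw [← Complex.norm_mul_exp_arg_mul_I u2]
    rw [hconjθ, mul_comm, mul_assoc, ← Complex.exp_add]
    congr 2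
    push_cast
    ring
  have hsum : ‖θ * u1 + (starRingEnd ℂ) θ * u2‖
      = ‖u1‖ + ‖u2‖ := by
    rw [h1, h2, ← add_mul, norm_mul]
    rw [Complex.norm_exp_ofReal_mul_I, mul_one]
    rw [← Complex.ofReal_add, Complex.norm_real, Real.norm_eq_abs]
    exact abs_of_nonneg (by positivity)
  -- apply the core inequality with v = θ • η
  have hcore := core a b x ha ξ hξ l haξ hL2 (θ • η)
  have e1 : (⟪ξ, (x - a * b) (θ • η)⟫ : ℂ) = θ * u1 := by
    rw [map_smul, inner_smul_right, hu1]
  have e2 : (⟪θ • η, (x - b * a) ξ⟫ : ℂ) = (starRingEnd ℂ) θ * u2 := by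
    rw [inner_smul_left, hu2]
  have e3 : ‖(l • (1 : H →L[ℂ] H) - a) (θ • η)‖ = ‖(l • (1 : H →L[ℂ] H) - a) η‖ := by
    rw [map_smul, norm_smul, hθabs, one_mul]
  rw [e1, e2, e3, hsum] at hcore
  rw [hu1, hu2] at hcore
  exact hcore
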